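/- Let T = (C_n, R, σ) be a tanglegram of size n ≥ 5 where R = R1 ⊕ R2 is non-strippable (both |R1|, |R2| ≥ 2), and let {v_1,...,v_n} be a distance-to-root labeling of C_n. If v_n and v_{n-1} are matched to leaves in the same maximal pending subtree R_i of R, then in at least n - 2 cards of D^m(T) the two deepest leaves v'_{n-1}, v'_{n-2} of the resulting caterpillar C_{n-1} are matched to the same maximal pending subtree of the resulting right tree; if v_n and v_{n-1} are matched to different maximal pending subtrees, then exactly one card has this property. -/

import Mathlib

/-- A rooted binary tree: every vertex has zero or two children. -/
inductive RBT : Type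
  | leaf : RBT
  | node : RBT → RBT → RBT
deriving DecidableEq

namespace RBT
/-- Number of leaves. -/
def numLeaves : RBT → ℕ
  | leaf => 1
  | node l r => l.numLeaves + r.numLeaves

/-- Root-preserving isomorphism of rooted binary trees (children may be swapped). -/
inductive Iso : RBT → RBT → Prop
  | leaf : Iso leaf leaf
  | node {a b c d : RBT} : Iso a c → Iso b d → Iso (node a b) (node c d)
  | swap {a b c d : RBT} : Iso a d → Iso b c → Iso (node a b) (node c d)
end RBT

/-- A rooted binary tree with natural-number labels on its leaves. -/
inductive LTree : Type
  | leaf : ℕ → LTree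
  | node : LTree → LTree → LTree
deriving DecidableEq

namespace LTree

/-- The multiset of leaf labels. -/
def labels : LTree → Multiset ℕ
  | leaf a => {a}
  | node l r => l.labels + r.labels

/-- Relabel the leaves. -/
def map (f : ℕ → ℕ) : LTree → LTree
  | leaf a => leaf (f a)
  | node l r => node (map f l) (map f r)

/-- Forget the labels, obtaining a plain rooted binary tree. -/
def forget : LTree → RBT
  | leaf _ => .leaf
  | node l r => .node l.forget r.forget

/-- Delete the leaf (or leaves) with label `i`, suppressing the resulting degree-2 vertices;
returns `none` if nothing is left. -/
def del (i : ℕ) : LTree → Option LTree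
  | leaf a => if a = i then none else some (leaf a)
  | node l r =>
    match l.del i with
    | none => some r
    | some l' =>
      match r.del i with
      | none => some l'
      | some r' => some (node l' r')

/-- Label-preserving, root-preserving isomorphism of labeled trees (children may be swapped). -/
inductive LIso : LTree → LTree → Prop
  | leaf (a : ℕ) : LIso (leaf a) (leaf a)
  | node {a b c d : LTree} : LIso a c → LIso b d → LIso (node a b) (node c d)
  | swap {a b c d : LTree} : LIso a d → LIso b c → LIso (node a b) (node c d)

end LTree

/-- A tanglegram is modeled as a pair of labeled trees in which matched leaves carry the same
label: the labels of the left tree are distinct and coincide (as a multiset) with the labels of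
the right tree. -/
def IsTgl (p : LTree × LTree) : Prop := p.1.labels.Nodup ∧ p.1.labels = p.2.labels

/-- The size of a tanglegram: its number of matching edges. -/
def tglSize (p : LTree × LTree) : ℕ := Multiset.card p.1.labels

/-- Tanglegram isomorphism: a relabeling of the matching edges under which the left trees and
the right trees become isomorphic (mapping left root to left root and right root to right
root, and preserving the matching). -/
def TIso (p q : LTree × LTree) : Prop :=
  ∃ π : ℕ ≃ ℕ, LTree.LIso (p.1.map π) q.1 ∧ LTree.LIso (p.2.map π) q.2

/-- The card of a tanglegram obtained by deleting the matched leaf pair with label `i`. -/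
def tcard (p : LTree × LTree) (i : ℕ) : LTree × LTree :=
  ((p.1.del i).getD (.leaf 0), (p.2.del i).getD (.leaf 0))

/-- The multideck of a tanglegram: the multiset of cards obtained by deleting one matched leaf
pair in every possible way. -/
def tdeck (p : LTree × LTree) : Multiset (LTree × LTree) :=
  p.1.labels.map (fun i => tcard p i)

/-- `lcat k n` is the caterpillar on n leaves with a distance-to-root labeling whose labels are
k, k+1, ..., k+n-1 (label k+j-1 on the strippable leaf at distance j from the root). In
particular `lcat 1 n` is C_n with distance-to-root labeling v_1, ..., v_n. -/
def lcat : ℕ → ℕ → LTree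
  | k, 0 => .leaf k
  | k, 1 => .leaf k
  | k, n + 2 => .node (.leaf k) (lcat (k + 1) (n + 1))

/-- For a caterpillar-shaped labeled tree, the list of leaf labels in distance-to-root order. -/
def catList : LTree → List ℕ
  | .leaf a => [a]
  | .node (.leaf a) r => a :: catList r
  | .node l (.leaf a) => a :: catList l
  | .node _ _ => []

/-- The leaves with labels `a` and `b` lie in the same maximal pending subtree of `R`. -/
def sameSide : LTree → ℕ → ℕ → Bool
  | .leaf _, _, _ => false
  | .node r1 r2, a, b =>
      (decide (a ∈ r1.labels) && decide (b ∈ r1.labels)) ||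
      (decide (a ∈ r2.labels) && decide (b ∈ r2.labels))

/-- On the card of the size-n tanglegram (C_n, R, σ) obtained by deleting the matched pair
with label `i`, the two deepest leaves v'_{n-2} and v'_{n-1} of the resulting caterpillar
C_{n-1} are matched to leaves in the same maximal pending subtree of the resulting right
tree. -/
def deepPairSameSide (n i : ℕ) (p : LTree × LTree) : Bool :=
  match (catList (tcard p i).1)[n - 3]?, (catList (tcard p i).1)[n - 2]? with
  | some a, some b => sameSide (tcard p i).2 a b
  | _, _ => false

section Helpers
open LTree

lemma labels_lcat : ∀ n k, (lcat k (n+1)).labels = (List.range' k (n+1) : Multiset ℕ) := by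
  intro n
  induction n with
  | zero => intro k; simp [lcat, LTree.labels, List.range']
  | succ m ih =>
    intro k
    show (LTree.node (.leaf k) (lcat (k+1) (m+1))).labels = _
    rw [List.range'_succ]
    simp [LTree.labels, ih (k+1)]

lemma catList_lcat : ∀ n k, catList (lcat k (n+1)) = List.range' k (n+1) := by
  intro n
  induction n with
  | zero => intro k; simp [lcat, catList, List.range']
  | succ m ih =>
    intro k
    show catList (LTree.node (.leaf k) (lcat (k+1) (m+1))) = _
    rw [List.range'_succ, catList, ih (k+1)]

lemma labels_pos (t : LTree) : t.labels ≠ 0 := by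
  induction t with
  | leaf a => simp [LTree.labels]
  | node l r ihl ihr =>
    rw [LTree.labels]
    intro h
    apply ihl
    have := congrArg Multiset.card h
    rw [Multiset.card_add, Multiset.card_zero] at this
    exact Multiset.card_eq_zero.1 (by omega)

lemma del_not_mem {t : LTree} {i : ℕ} (h : i ∉ t.labels) : t.del i = some t := by
  induction t with
  | leaf a =>
    simp [LTree.labels] at h
    simp [LTree.del, Ne.symm h]
  | node l r ihl ihr =>
    simp [LTree.labels] at h
    rw [LTree.del, ihl h.1, ihr h.2]

lemma labels_del {t : LTree} (hnd : t.labels.Nodup) (i : ℕ) :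
    ((t.del i).map LTree.labels).getD 0 = t.labels.filter (· ≠ i) := by
  induction t with
  | leaf a =>
    by_cases h : a = i <;> simp [LTree.del, h, LTree.labels, Multiset.filter_singleton]
  | node l r ihl ihr =>
    rw [LTree.labels] at hnd
    have hndl := (Multiset.nodup_add.1 hnd).1
    have hndr := (Multiset.nodup_add.1 hnd).2.1
    have hdisj := (Multiset.nodup_add.1 hnd).2.2
    specialize ihl hndl; specialize ihr hndr
    rw [LTree.del]
    rcases hl : l.del i with _ | l' <;> rcases hr : r.del i with _ | r' <;>
      rw [hl] at ihl <;> rw [hr] at ihr <;> simp at ihl ihr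
    · -- l.del = none, r.del = none: impossible-ish but result some r
      exfalso
      have hi : i ∈ l.labels := by
        rcases Multiset.exists_mem_of_ne_zero (labels_pos l) with ⟨a, ha⟩
        have := Multiset.count_filter (a := a) (p := (· ≠ i)) (s := l.labels)
        by_contra hix
        have : a ≠ i := fun h => hix (h ▸ ha)
        have : a ∈ Multiset.filter (fun x => ¬x = i) l.labels :=
          Multiset.mem_filter.2 ⟨ha, this⟩
        rw [← ihl] at this; simp at this
      have hir : i ∈ r.labels := by
        rcases Multiset.exists_mem_of_ne_zero (labels_pos r) with ⟨a, ha⟩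
        by_contra hix
        have : a ≠ i := fun h => hix (h ▸ ha)
        have : a ∈ Multiset.filter (fun x => ¬x = i) r.labels :=
          Multiset.mem_filter.2 ⟨ha, this⟩
        rw [← ihr] at this; simp at this
      exact (Multiset.disjoint_left.1 hdisj) hi hir
    · -- l.del = none, r.del = some r' : result is some r (not r'!)
      have hi : i ∈ l.labels := by
        rcases Multiset.exists_mem_of_ne_zero (labels_pos l) with ⟨a, ha⟩
        by_contra hix
        have : a ≠ i := fun h => hix (h ▸ ha)
        have : a ∈ Multiset.filter (fun x => ¬x = i) l.labels :=
          Multiset.mem_filter.2 ⟨ha, this⟩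
        rw [← ihl] at this; simp at this
      have hir : i ∉ r.labels := Multiset.disjoint_left.1 hdisj hi
      have : Multiset.filter (fun x => ¬x = i) r.labels = r.labels :=
        Multiset.filter_eq_self.2 (fun a ha h => hir (h ▸ ha))
      simp [LTree.labels, Multiset.filter_add, ← ihl, this]
    · simp [LTree.labels, Multiset.filter_add, ← ihl, ← ihr]
    · simp [LTree.labels, Multiset.filter_add, ← ihl, ← ihr]

lemma del_some {t : LTree} {i a : ℕ} (hnd : t.labels.Nodup)
    (ha : a ∈ t.labels) (hai : a ≠ i) :
    ∃ t', t.del i = some t' ∧ t'.labels = t.labels.filter (· ≠ i) := by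
  have h := labels_del hnd i
  rcases hd : t.del i with _ | t'
  · rw [hd] at h; simp at h
    have : a ∈ t.labels.filter (· ≠ i) := Multiset.mem_filter.2 ⟨ha, hai⟩
    rw [← h] at this; simp at this
  · rw [hd] at h; simp at h
    exact ⟨t', rfl, h⟩

lemma del_lcat : ∀ n k i, ∃ t, (lcat k (n+2)).del i = some t ∧
    catList t = (List.range' k (n+2)).erase i := by
  intro n
  induction n with
  | zero =>
    intro k i
    show ∃ t, (LTree.node (.leaf k) (.leaf (k+1))).del i = some t ∧ _
    by_cases h1 : k = i
    · subst h1
      refine ⟨.leaf (k+1), ?_, ?_⟩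
      · simp [LTree.del]
      · simp [catList, List.range', List.erase_cons]
    · by_cases h2 : k + 1 = i
      · refine ⟨.leaf k, ?_, ?_⟩
        · simp [LTree.del, h1, h2]
        · subst h2
          simp [catList, List.range', List.erase_cons, h1]
      · refine ⟨.node (.leaf k) (.leaf (k+1)), ?_, ?_⟩
        · simp [LTree.del, h1, h2]
        · simp [catList, List.range', List.erase_cons, h1, h2]
  | succ m ih =>
    intro k i
    show ∃ t, (LTree.node (.leaf k) (lcat (k+1) (m+2))).del i = some t ∧ _
    by_cases h1 : k = i
    · subst h1
      refine ⟨lcat (k+1) (m+2), ?_, ?_⟩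
      · rw [LTree.del]
        simp [LTree.del]
      · rw [catList_lcat,
          show (List.range' k (m+1+2)).erase k = List.range' (k+1) (m+2) from by
            rw [List.range'_succ, List.erase_cons_head]]
    · obtain ⟨t', ht', hc⟩ := ih (k+1) i
      refine ⟨.node (.leaf k) t', ?_, ?_⟩
      · rw [LTree.del]
        rw [show del i (LTree.leaf k) = some (.leaf k) from by simp [LTree.del, h1], ht']
      · rw [List.range'_succ, List.erase_cons_tail (by simp [h1]), ← hc]
        cases t' <;> simp [catList]

end Helpers
lemma mem_range1 {a s n : ℕ} : a ∈ List.range' s n ↔ s ≤ a ∧ a < s + n := by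
  rw [List.mem_range']
  constructor
  · rintro ⟨i, hi, rfl⟩; omega
  · intro h; exact ⟨a - s, by omega, by omega⟩

lemma range_split (m : ℕ) : List.range' 1 (m+5) = List.range' 1 (m+3) ++ List.range' (m+4) 2 := by
  have h := List.range'_append_1 (s := 1) (m := m+3) (n := 2)
  rw [show 1+(m+3) = m+4 from by omega] at h
  rw [show m+5 = (m+3)+2 from by omega, ← h]

lemma erase_idx_lo (m i : ℕ) (h1 : 1 ≤ i) (h2 : i ≤ m+3) :
    ((List.range' 1 (m+5)).erase i)[m+2]? = some (m+4) ∧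
    ((List.range' 1 (m+5)).erase i)[m+3]? = some (m+5) := by
  have hmem : i ∈ List.range' 1 (m+3) := mem_range1.2 ⟨h1, by omega⟩
  have hlen : ((List.range' 1 (m+3)).erase i).length = m+2 := by
    rw [List.length_erase_of_mem hmem, List.length_range']
    omega
  rw [range_split, List.erase_append_left _ hmem]
  constructor
  · rw [List.getElem?_append_right (by omega), hlen]
    simp [List.range']
  · rw [List.getElem?_append_right (by omega), hlen]
    simp [List.range', show m+3-(m+2) = 1 from by omega]

lemma erase_idx_hi (m : ℕ) (j : ℕ) (hj : j = 0 ∨ j = 1) :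
    ((List.range' 1 (m+5)).erase (m+4+j))[m+2]? = some (m+3) ∧
    ((List.range' 1 (m+5)).erase (m+4+j))[m+3]? = some (m+4+(1-j)) := by
  have hnmem : m+4+j ∉ List.range' 1 (m+3) := by
    rw [mem_range1]; omega
  rw [range_split, List.erase_append_right _ hnmem]
  have e2 : (List.range' (m+4) 2).erase (m+4+j) = [m+4+(1-j)] := by
    rcases hj with rfl | rfl <;>
      simp [List.range', List.erase_cons, show ¬ m+4 = m+4+1 from by omega]
  rw [e2]
  have hlen : (List.range' 1 (m+3)).length = m+3 := List.length_range' ..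
  constructor
  · rw [List.getElem?_append_left (by omega)]
    rw [List.getElem?_range' (by omega)]
    congr 1
    omega
  · rw [List.getElem?_append_right (by omega), hlen]
    simp
/-- Let T = (C_n, R, σ) be a tanglegram of size n ≥ 5 with left tree the
caterpillar `lcat 1 n` (distance-to-root labeling v_1, …, v_n, matching given by equal
labels) and right tree R = R1 ⊕ R2 non-strippable (|R1|, |R2| ≥ 2). If v_n and v_{n-1} are
matched to leaves in the same maximal pending subtree of R, then at least n - 2 of the n
cards have their two deepest left leaves v'_{n-1}, v'_{n-2} matched to the same maximal
pending subtree of the card's right tree; if v_n and v_{n-1} are matched to different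
maximal pending subtrees, then exactly one card has this property. -/
theorem nonstrippable_right_tree_deep_pair (n : ℕ) (hn : 5 ≤ n) (R1 R2 : LTree)
    (hlab : (LTree.node R1 R2).labels = (lcat 1 n).labels)
    (h1 : 2 ≤ Multiset.card R1.labels) (h2 : 2 ≤ Multiset.card R2.labels) :
    ∀ T : LTree × LTree, T = (lcat 1 n, LTree.node R1 R2) →
      (sameSide (LTree.node R1 R2) n (n - 1) = true →
        n - 2 ≤ ((Finset.Icc 1 n).filter (fun i => deepPairSameSide n i T = true)).card) ∧
      (sameSide (LTree.node R1 R2) n (n - 1) = false →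
        ((Finset.Icc 1 n).filter (fun i => deepPairSameSide n i T = true)).card = 1) := by
  intro T hT
  subst hT
  obtain ⟨m, rfl⟩ : ∃ m, n = m + 5 := ⟨n - 5, by omega⟩
  have hRL : R1.labels + R2.labels = ((List.range' 1 (m+5) : List ℕ) : Multiset ℕ) := by
    rw [← labels_lcat (m+4) 1]; exact hlab
  have hnodup : (R1.labels + R2.labels).Nodup := by
    rw [hRL, Multiset.coe_nodup]; exact List.nodup_range' (s := 1) (n := m+5)
  have hnd1 : R1.labels.Nodup := (Multiset.nodup_add.1 hnodup).1
  have hnd2 : R2.labels.Nodup := (Multiset.nodup_add.1 hnodup).2.1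
  have hnot : ∀ a, a ∈ R1.labels → a ∉ R2.labels := fun a h =>
    Multiset.disjoint_left.1 (Multiset.nodup_add.1 hnodup).2.2 h
  have htot : ∀ a, 1 ≤ a → a ≤ m+5 → a ∈ R1.labels ∨ a ∈ R2.labels := by
    intro a ha1 ha2
    have : a ∈ R1.labels + R2.labels := by
      rw [hRL, Multiset.mem_coe, mem_range1]; omega
    simpa [Multiset.mem_add] using this
  -- left part of any card
  have hcatL : ∀ i, catList (tcard (lcat 1 (m+5), LTree.node R1 R2) i).1
      = (List.range' 1 (m+5)).erase i := by
    intro i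
    obtain ⟨t, ht, hc⟩ := del_lcat (m+3) 1 i
    have : (tcard (lcat 1 (m+5), LTree.node R1 R2) i).1 = t := by
      show ((lcat 1 (m+5)).del i).getD (.leaf 0) = t
      rw [show (lcat 1 (m+5)).del i = some t from ht]
      rfl
    rw [this]; exact hc
  -- right part of any card
  have hcardR : ∀ i, 1 ≤ i → i ≤ m+5 →
      ∃ A B, (tcard (lcat 1 (m+5), LTree.node R1 R2) i).2 = LTree.node A B ∧
        (∀ a, a ≠ i → (a ∈ A.labels ↔ a ∈ R1.labels)) ∧
        (∀ a, a ≠ i → (a ∈ B.labels ↔ a ∈ R2.labels)) := by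
    intro i hi1 hi2
    rcases htot i hi1 hi2 with hi | hi
    · have hw : ∃ a, a ∈ R1.labels ∧ a ≠ i := by
        have hpos : 0 < Multiset.card (R1.labels.erase i) := by
          rw [Multiset.card_erase_of_mem hi, Nat.pred_eq_sub_one]; omega
        obtain ⟨a, ha⟩ := Multiset.card_pos_iff_exists_mem.1 hpos
        exact ⟨a, Multiset.mem_of_mem_erase ha, (hnd1.mem_erase_iff.1 ha).1⟩
      obtain ⟨a, ha, hai⟩ := hw
      obtain ⟨R1', h1d, h1l⟩ := del_some hnd1 ha hai
      have h2d : R2.del i = some R2 := del_not_mem (hnot i hi)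
      refine ⟨R1', R2, ?_, ?_, fun a _ => Iff.rfl⟩
      · show ((LTree.node R1 R2).del i).getD (.leaf 0) = _
        rw [LTree.del, h1d, h2d]
        rfl
      · intro a haai
        rw [h1l, Multiset.mem_filter]
        simp [haai]
    · have hi1' : i ∉ R1.labels := fun h => hnot i h hi
      have hw : ∃ a, a ∈ R2.labels ∧ a ≠ i := by
        have hpos : 0 < Multiset.card (R2.labels.erase i) := by
          rw [Multiset.card_erase_of_mem hi, Nat.pred_eq_sub_one]; omega
        obtain ⟨a, ha⟩ := Multiset.card_pos_iff_exists_mem.1 hpos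
        exact ⟨a, Multiset.mem_of_mem_erase ha, (hnd2.mem_erase_iff.1 ha).1⟩
      obtain ⟨a, ha, hai⟩ := hw
      obtain ⟨R2', h2d, h2l⟩ := del_some hnd2 ha hai
      have h1d : R1.del i = some R1 := del_not_mem hi1'
      refine ⟨R1, R2', ?_, fun a _ => Iff.rfl, ?_⟩
      · show ((LTree.node R1 R2).del i).getD (.leaf 0) = _
        rw [LTree.del, h1d, h2d]
        rfl
      · intro a haai
        rw [h2l, Multiset.mem_filter]
        simp [haai]
  -- master equivalence
  have master : ∀ i a b, a ≠ i → b ≠ i → 1 ≤ i → i ≤ m+5 →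
      ((List.range' 1 (m+5)).erase i)[m+2]? = some a →
      ((List.range' 1 (m+5)).erase i)[m+3]? = some b →
      (deepPairSameSide (m+5) i (lcat 1 (m+5), LTree.node R1 R2) = true ↔
        sameSide (LTree.node R1 R2) a b = true) := by
    intro i a b hai hbi hi1 hi2 hIa hIb
    obtain ⟨A, B, hAB, hA, hB⟩ := hcardR i hi1 hi2
    have hd : deepPairSameSide (m+5) i (lcat 1 (m+5), LTree.node R1 R2) =
        sameSide (tcard (lcat 1 (m+5), LTree.node R1 R2) i).2 a b := by
      rw [deepPairSameSide, show (m+5)-3 = m+2 from rfl, show (m+5)-2 = m+3 from rfl,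
        hcatL i, hIa, hIb]
    rw [hd, hAB]
    simp only [sameSide, Bool.or_eq_true, Bool.and_eq_true, decide_eq_true_eq]
    rw [hA a hai, hB a hai, hA b hbi, hB b hbi]
  constructor
  · -- same side case
    intro hsame
    simp only [sameSide, Bool.or_eq_true, Bool.and_eq_true, decide_eq_true_eq] at hsame
    have hsub : Finset.Icc 1 (m+3) ⊆ (Finset.Icc 1 (m+5)).filter
        (fun i => deepPairSameSide (m+5) i (lcat 1 (m+5), LTree.node R1 R2) = true) := by
      intro i hi
      rw [Finset.mem_Icc] at hi
      rw [Finset.mem_filter, Finset.mem_Icc]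
      refine ⟨⟨hi.1, by omega⟩, ?_⟩
      obtain ⟨hIa, hIb⟩ := erase_idx_lo m i hi.1 hi.2
      rw [master i (m+4) (m+5) (by omega) (by omega) hi.1 (by omega) hIa hIb]
      simp only [sameSide, Bool.or_eq_true, Bool.and_eq_true, decide_eq_true_eq]
      have hsame' : (m+5 ∈ R1.labels ∧ m+4 ∈ R1.labels) ∨
          (m+5 ∈ R2.labels ∧ m+4 ∈ R2.labels) := hsame
      tauto
    calc m+5-2 = (Finset.Icc 1 (m+3)).card := by rw [Nat.card_Icc]; omega
      _ ≤ _ := Finset.card_le_card hsub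
  · -- different sides case
    intro hdiff
    have hdiff' : ¬ ((m+5 ∈ R1.labels ∧ m+4 ∈ R1.labels) ∨
        (m+5 ∈ R2.labels ∧ m+4 ∈ R2.labels)) := by
      intro h
      have : sameSide (LTree.node R1 R2) (m+5) (m+5-1) = true := by
        simp only [sameSide, Bool.or_eq_true, Bool.and_eq_true, decide_eq_true_eq]
        exact h
      rw [hdiff] at this; exact Bool.false_ne_true this
    push_neg at hdiff'
    have hm5 := htot (m+5) (by omega) (by omega)
    have hm4 := htot (m+4) (by omega) (by omega)
    have hm3 := htot (m+3) (by omega) (by omega)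
    have hlow : ∀ i, 1 ≤ i → i ≤ m+3 →
        deepPairSameSide (m+5) i (lcat 1 (m+5), LTree.node R1 R2) = false := by
      intro i hi1 hi2
      obtain ⟨hIa, hIb⟩ := erase_idx_lo m i hi1 hi2
      rw [← Bool.not_eq_true, master i (m+4) (m+5) (by omega) (by omega) hi1 (by omega) hIa hIb]
      simp only [sameSide, Bool.or_eq_true, Bool.and_eq_true, decide_eq_true_eq]
      tauto
    have h4iff : deepPairSameSide (m+5) (m+4) (lcat 1 (m+5), LTree.node R1 R2) = true ↔
        ((m+3 ∈ R1.labels ∧ m+5 ∈ R1.labels) ∨ (m+3 ∈ R2.labels ∧ m+5 ∈ R2.labels)) := by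
      obtain ⟨hIa, hIb⟩ := erase_idx_hi m 0 (Or.inl rfl)
      rw [master (m+4) (m+3) (m+4+(1-0)) (by omega) (by omega) (by omega) (by omega) hIa hIb]
      simp only [sameSide, Bool.or_eq_true, Bool.and_eq_true, decide_eq_true_eq]
    have h5iff : deepPairSameSide (m+5) (m+5) (lcat 1 (m+5), LTree.node R1 R2) = true ↔
        ((m+3 ∈ R1.labels ∧ m+4 ∈ R1.labels) ∨ (m+3 ∈ R2.labels ∧ m+4 ∈ R2.labels)) := by
      obtain ⟨hIa, hIb⟩ := erase_idx_hi m 1 (Or.inr rfl)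
      rw [show m+4+1 = m+5 from rfl] at hIa hIb
      rw [master (m+5) (m+3) (m+4+(1-1)) (by omega) (by omega) (by omega) (by omega) hIa hIb]
      simp only [sameSide, Bool.or_eq_true, Bool.and_eq_true, decide_eq_true_eq]
    have hfin : ∀ j j', (j = m+4 ∧ j' = m+5 ∨ j = m+5 ∧ j' = m+4) →
        deepPairSameSide (m+5) j (lcat 1 (m+5), LTree.node R1 R2) = true →
        deepPairSameSide (m+5) j' (lcat 1 (m+5), LTree.node R1 R2) = false →
        ((Finset.Icc 1 (m+5)).filter
          (fun i => deepPairSameSide (m+5) i (lcat 1 (m+5), LTree.node R1 R2) = true)).card = 1 := by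
      intro j j' hjj hj hj'
      have hset : (Finset.Icc 1 (m+5)).filter
          (fun i => deepPairSameSide (m+5) i (lcat 1 (m+5), LTree.node R1 R2) = true) = {j} := by
        apply Finset.eq_singleton_iff_unique_mem.2
        constructor
        · rw [Finset.mem_filter, Finset.mem_Icc]
          rcases hjj with ⟨rfl, _⟩ | ⟨rfl, _⟩ <;> exact ⟨⟨by omega, by omega⟩, hj⟩
        · intro x hx
          rw [Finset.mem_filter, Finset.mem_Icc] at hx
          by_contra hne
          rcases Nat.lt_or_ge x (m+4) with h | h
          · rw [hlow x hx.1.1 (by omega)] at hx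
            exact Bool.false_ne_true hx.2
          · have hxj' : x = j' := by rcases hjj with ⟨h1, h2⟩ | ⟨h1, h2⟩ <;> omega
            rw [hxj', hj'] at hx
            exact Bool.false_ne_true hx.2
      rw [hset, Finset.card_singleton]
    have n3 := hnot (m+3)
    have n4 := hnot (m+4)
    have n5 := hnot (m+5)
    rcases hm5 with h5a | h5a <;> rcases hm4 with h4a | h4a
    · exact absurd h4a (hdiff'.1 h5a)
    · rcases hm3 with h3a | h3a
      · refine hfin (m+4) (m+5) (Or.inl ⟨rfl, rfl⟩) (h4iff.2 (Or.inl ⟨h3a, h5a⟩)) ?_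
        rw [← Bool.not_eq_true, h5iff]
        rintro (⟨hx, hy⟩ | ⟨hx, hy⟩)
        · exact n4 hy h4a
        · exact n3 h3a hx
      · refine hfin (m+5) (m+4) (Or.inr ⟨rfl, rfl⟩) (h5iff.2 (Or.inr ⟨h3a, h4a⟩)) ?_
        rw [← Bool.not_eq_true, h4iff]
        rintro (⟨hx, hy⟩ | ⟨hx, hy⟩)
        · exact n3 hx h3a
        · exact n5 h5a hy
    · rcases hm3 with h3a | h3a
      · refine hfin (m+5) (m+4) (Or.inr ⟨rfl, rfl⟩) (h5iff.2 (Or.inl ⟨h3a, h4a⟩)) ?_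
        rw [← Bool.not_eq_true, h4iff]
        rintro (⟨hx, hy⟩ | ⟨hx, hy⟩)
        · exact n5 hy h5a
        · exact n3 h3a hx
      · refine hfin (m+4) (m+5) (Or.inl ⟨rfl, rfl⟩) (h4iff.2 (Or.inr ⟨h3a, h5a⟩)) ?_
        rw [← Bool.not_eq_true, h5iff]
        rintro (⟨hx, hy⟩ | ⟨hx, hy⟩)
        · exact n3 hx h3a
        · exact n4 h4a hy
    · exact absurd h4a (hdiff'.2 h5a)
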